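/- arXiv:1403.7170 — 2 statements merged into one kernel-verified Lean document; each statement's English description precedes it below -/
import Mathlib

section
/- Let $x : [t_0, t_1] \to \mathbb{R}^n$ be a $C^1$ solution of $x' = f(t,x)$ and let $y : [t_0, t_1] \to \mathbb{R}^n$ be a $C^1$ function satisfying $\|y'(t) - f(t, y(t))\| \leq \delta$ for all $t$. Assume the logarithmic norm of $\partial f/\partial z(t,z)$ is bounded above by $l \neq 0$ on a convex set containing both curves. Then for $t \in [t_0, t_1]$, $\|x(t) - y(t)\| \leq e^{l(t-t_0)} \|x(t_0) - y(t_0)\| + \delta \, (e^{l(t-t_0)} - 1)/l$. -/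
open Real Set Filter
open scoped Topology RealInnerProductSpace

/-- The logarithmic norm of a linear operator `A` (with respect to the norm of
`E`) is bounded above by `l`:
`μ(A) = lim_{h → 0⁺} (‖I + h A‖ - 1)/h ≤ l`. -/
def LogNormBoundedBy {E : Type*} [NormedAddCommGroup E] [NormedSpace ℝ E]
    (A : E →L[ℝ] E) (l : ℝ) : Prop :=
  ∀ ε > 0, ∃ δ > 0, ∀ h : ℝ, 0 < h → h < δ →
    (‖ContinuousLinearMap.id ℝ E + h • A‖ - 1) / h ≤ l + ε

/-- In an inner product space, a logarithmic norm bound gives a one-sided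
inner-product estimate `⟪A u, u⟫ ≤ l ‖u‖²`. -/
lemma logNormBoundedBy_inner_le {E : Type*} [NormedAddCommGroup E] [InnerProductSpace ℝ E]
    {A : E →L[ℝ] E} {l : ℝ} (hA : LogNormBoundedBy A l) (u : E) :
    ⟪A u, u⟫ ≤ l * ‖u‖ ^ 2 := by
  rcases eq_or_ne u 0 with rfl | hu
  · simp
  have hn : (0 : ℝ) < ‖u‖ ^ 2 := pow_pos (norm_pos_iff.mpr hu) 2
  by_contra hcon
  push_neg at hcon
  set ε := (⟪A u, u⟫ - l * ‖u‖ ^ 2) / (2 * ‖u‖ ^ 2) with hε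
  have hεpos : 0 < ε := div_pos (sub_pos.2 hcon) (by linarith)
  obtain ⟨d, hd, hbd⟩ := hA ε hεpos
  set h := d / 2 with hhdef
  have hh : 0 < h := half_pos hd
  have h1 := hbd h hh (half_lt_self hd)
  have h2 : ‖u + h • A u‖ ≤ ‖ContinuousLinearMap.id ℝ E + h • A‖ * ‖u‖ := by
    have := (ContinuousLinearMap.id ℝ E + h • A).le_opNorm u
    simpa using this
  have h3 : ‖u‖ ^ 2 + h * ⟪A u, u⟫ ≤ ‖u + h • A u‖ * ‖u‖ := by
    calc ‖u‖ ^ 2 + h * ⟪A u, u⟫ = ⟪u + h • A u, u⟫ := by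
          rw [inner_add_left, real_inner_smul_left, real_inner_self_eq_norm_sq]
      _ ≤ ‖u + h • A u‖ * ‖u‖ := real_inner_le_norm _ _
  have h4 : ‖ContinuousLinearMap.id ℝ E + h • A‖ - 1 ≤ h * (l + ε) := by
    have := (div_le_iff₀ hh).1 h1
    linarith
  have h5 : h * ⟪A u, u⟫ ≤ h * (l + ε) * ‖u‖ ^ 2 := by
    nlinarith [mul_le_mul_of_nonneg_right h2 (norm_nonneg u)]
  have h6 : ⟪A u, u⟫ ≤ (l + ε) * ‖u‖ ^ 2 := by
    have := (mul_le_mul_iff_right₀ hh).1 (by linarith : h * ⟪A u, u⟫ ≤ h * ((l + ε) * ‖u‖ ^ 2))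
    exact this
  have hεval : ε * ‖u‖ ^ 2 = (⟪A u, u⟫ - l * ‖u‖ ^ 2) / 2 := by
    rw [hε]; field_simp
  nlinarith [h6]

/-- One-sided mean value estimate on a convex set. -/
lemma inner_image_sub_le_of_inner_fderiv_le {E : Type*} [NormedAddCommGroup E]
    [InnerProductSpace ℝ E] {g : E → E} {Dg : E → E →L[ℝ] E}
    (hDg : ∀ z, HasFDerivAt g (Dg z) z) {W : Set E} (hW : Convex ℝ W) {l : ℝ}
    (hbound : ∀ z ∈ W, ∀ v, ⟪Dg z v, v⟫ ≤ l * ‖v‖ ^ 2)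
    {a b : E} (ha : a ∈ W) (hb : b ∈ W) :
    ⟪g b - g a, b - a⟫ ≤ l * ‖b - a‖ ^ 2 := by
  set v := b - a with hv
  set G : ℝ → ℝ := fun s => l * ‖v‖ ^ 2 * s - ⟪g (a + s • v), v⟫ with hG
  have hγ : ∀ s : ℝ, HasDerivAt (fun s : ℝ => a + s • v) v s := fun s => by
    simpa using ((hasDerivAt_id s).smul_const v).const_add a
  have hg' : ∀ s : ℝ,
      HasDerivAt (fun s : ℝ => ⟪g (a + s • v), v⟫) (⟪Dg (a + s • v) v, v⟫) s := by
    intro s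
    have h1 : HasDerivAt (fun s : ℝ => g (a + s • v)) (Dg (a + s • v) v) s :=
      (hDg _).comp_hasDerivAt s (hγ s)
    simpa using HasDerivAt.inner ℝ h1 (hasDerivAt_const s v)
  have hGd : ∀ s : ℝ, HasDerivAt G (l * ‖v‖ ^ 2 - ⟪Dg (a + s • v) v, v⟫) s := by
    intro s
    have h := ((hasDerivAt_id s).const_mul (l * ‖v‖ ^ 2)).sub (hg' s)
    exact h.congr_deriv (by simp)
  have hmono : MonotoneOn G (Icc (0 : ℝ) 1) := by
    apply monotoneOn_of_deriv_nonneg (convex_Icc 0 1)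
    · exact fun s _ => (hGd s).continuousAt.continuousWithinAt
    · exact fun s _ => (hGd s).differentiableAt.differentiableWithinAt
    · intro s hs
      rw [interior_Icc] at hs
      rw [(hGd s).deriv]
      have hmem : a + s • v ∈ W := by
        rw [hv]
        exact hW.add_smul_sub_mem ha hb ⟨hs.1.le, hs.2.le⟩
      have := hbound _ hmem v
      linarith
  have h01 : G 0 ≤ G 1 :=
    hmono (left_mem_Icc.2 zero_le_one) (right_mem_Icc.2 zero_le_one) zero_le_one
  have e0 : a + (0 : ℝ) • v = a := by simp
  have e1 : a + (1 : ℝ) • v = b := by simp [hv]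
  simp only [hG, e0, e1, mul_zero, mul_one, zero_sub] at h01
  have : ⟪g b, v⟫ - ⟪g a, v⟫ ≤ l * ‖v‖ ^ 2 := by linarith
  rw [inner_sub_left]
  exact this

/-- Approximate-solution logarithmic norm estimate: if `x` solves
`x' = f(t,x)`, `y` is a `C¹` function with defect `‖y'(t) - f(t, y(t))‖ ≤ δ`,
both curves stay in a convex set `W` on which the logarithmic norm of
`∂f/∂z` is bounded by `l ≠ 0`, then
`‖x(t) - y(t)‖ ≤ e^{l(t-t0)} ‖x(t0) - y(t0)‖ + δ (e^{l(t-t0)} - 1)/l`. -/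
theorem lognorm_approx_solution_estimate {n : ℕ}
    (t0 t1 : ℝ)
    (f : ℝ → EuclideanSpace ℝ (Fin n) → EuclideanSpace ℝ (Fin n))
    (hfcont : Continuous (fun p : ℝ × EuclideanSpace ℝ (Fin n) => f p.1 p.2))
    (Df : ℝ → EuclideanSpace ℝ (Fin n) →
      (EuclideanSpace ℝ (Fin n) →L[ℝ] EuclideanSpace ℝ (Fin n)))
    (hDf : ∀ t z, HasFDerivAt (f t) (Df t z) z)
    (W : Set (EuclideanSpace ℝ (Fin n))) (hW : Convex ℝ W)
    (l : ℝ) (hl0 : l ≠ 0)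
    (hl : ∀ t ∈ Set.Icc t0 t1, ∀ z ∈ W, LogNormBoundedBy (Df t z) l)
    (x y : ℝ → EuclideanSpace ℝ (Fin n))
    (y' : ℝ → EuclideanSpace ℝ (Fin n))
    (δ : ℝ)
    (hx : ∀ t ∈ Set.Icc t0 t1, HasDerivAt x (f t (x t)) t)
    (hy : ∀ t ∈ Set.Icc t0 t1, HasDerivAt y (y' t) t)
    (hdefect : ∀ t ∈ Set.Icc t0 t1, ‖y' t - f t (y t)‖ ≤ δ)
    (hxW : ∀ t ∈ Set.Icc t0 t1, x t ∈ W)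
    (hyW : ∀ t ∈ Set.Icc t0 t1, y t ∈ W) :
    ∀ t ∈ Set.Icc t0 t1,
      ‖x t - y t‖ ≤ Real.exp (l * (t - t0)) * ‖x t0 - y t0‖ +
        δ * (Real.exp (l * (t - t0)) - 1) / l := by
  set u : ℝ → EuclideanSpace ℝ (Fin n) := fun s => x s - y s with hu
  have key : ∀ s ∈ Set.Icc t0 t1, ‖u s‖ ≤ gronwallBound ‖u t0‖ l δ (s - t0) := by
    apply le_gronwallBound_of_liminf_deriv_right_le
      (f' := fun s => l * ‖u s‖ + δ) (K := l) (ε := δ)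
    · intro s hs
      exact (((hx s hs).sub (hy s hs)).continuousAt.norm).continuousWithinAt
    · intro s hs r hr
      have hsI : s ∈ Set.Icc t0 t1 := ⟨hs.1, hs.2.le⟩
      have hu' : HasDerivAt u (f s (x s) - y' s) s := (hx s hsI).sub (hy s hsI)
      have hδ : ‖y' s - f s (y s)‖ ≤ δ := hdefect s hsI
      rcases eq_or_ne (u s) 0 with h0 | h0
      · -- the curves touch at `s`
        have hxy : x s = y s := sub_eq_zero.1 h0
        have hlim : Tendsto (fun z => ‖slope u s z‖) (𝓝[>] s) (𝓝 ‖f s (x s) - y' s‖) :=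
          ((hasDerivAt_iff_tendsto_slope.1 hu').mono_left
            (nhdsWithin_mono s fun z hz => ne_of_gt hz)).norm
        have hval : ‖f s (x s) - y' s‖ < r := by
          rw [hxy, ← norm_neg, neg_sub]
          calc ‖y' s - f s (y s)‖ ≤ δ := hδ
            _ ≤ l * ‖u s‖ + δ := by rw [h0]; simp
            _ < r := hr
        have hev : ∀ᶠ z in 𝓝[>] s, ‖slope u s z‖ < r := hlim.eventually_lt_const hval
        refine ((hev.and self_mem_nhdsWithin).mono ?_).frequently
        rintro z ⟨hz1, hz2⟩
        have hzs : (0 : ℝ) ≤ (z - s)⁻¹ :=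
          inv_nonneg.2 (sub_nonneg.2 (le_of_lt hz2))
        have : (z - s)⁻¹ * (‖u z‖ - ‖u s‖) = ‖slope u s z‖ := by
          rw [slope_def_module, norm_smul, h0, norm_zero, sub_zero, sub_zero,
            Real.norm_eq_abs, abs_of_nonneg hzs]
        rw [this]
        exact hz1
      · -- the curves are apart at `s`; the norm is differentiable
        have hq : HasDerivAt (fun z => ‖u z‖ ^ 2) (2 * ⟪u s, f s (x s) - y' s⟫) s :=
          hu'.norm_sq
        have hne : ‖u s‖ ^ 2 ≠ 0 := pow_ne_zero 2 (norm_ne_zero_iff.2 h0)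
        have hnpos : (0 : ℝ) < ‖u s‖ := norm_pos_iff.2 h0
        have hm : HasDerivAt (fun z => ‖u z‖) (⟪u s, f s (x s) - y' s⟫ / ‖u s‖) s := by
          have h1 := hq.sqrt hne
          have heq : (fun z => Real.sqrt (‖u z‖ ^ 2)) = fun z => ‖u z‖ := by
            funext z; exact Real.sqrt_sq (norm_nonneg _)
          rw [heq, Real.sqrt_sq (norm_nonneg _),
            mul_div_mul_left _ _ (two_ne_zero)] at h1
          exact h1
        have hbound' : ∀ z ∈ W, ∀ v, ⟪Df s z v, v⟫ ≤ l * ‖v‖ ^ 2 :=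
          fun z hz v => logNormBoundedBy_inner_le (hl s hsI z hz) v
        have hkey : ⟪u s, f s (x s) - y' s⟫ ≤ l * ‖u s‖ ^ 2 + δ * ‖u s‖ := by
          have hsplit : f s (x s) - y' s = (f s (x s) - f s (y s)) + (f s (y s) - y' s) := by
            abel
          rw [hsplit, inner_add_right]
          have h1 : ⟪u s, f s (x s) - f s (y s)⟫ ≤ l * ‖u s‖ ^ 2 := by
            have := inner_image_sub_le_of_inner_fderiv_le (hDf s) hW hbound'
              (hyW s hsI) (hxW s hsI)
            rwa [real_inner_comm] at this
          have h2 : ⟪u s, f s (y s) - y' s⟫ ≤ δ * ‖u s‖ := by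
            calc ⟪u s, f s (y s) - y' s⟫ ≤ ‖u s‖ * ‖f s (y s) - y' s‖ :=
                  real_inner_le_norm _ _
              _ ≤ ‖u s‖ * δ := by
                  refine mul_le_mul_of_nonneg_left ?_ (norm_nonneg _)
                  rw [norm_sub_rev]; exact hδ
              _ = δ * ‖u s‖ := mul_comm _ _
          linarith
        have hltr : ⟪u s, f s (x s) - y' s⟫ / ‖u s‖ < r := by
          rw [div_lt_iff₀ hnpos]
          nlinarith
        have hlim := (hasDerivAt_iff_tendsto_slope.1 hm).mono_left
          (nhdsWithin_mono s fun z hz => ne_of_gt hz)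
        have hev : ∀ᶠ z in 𝓝[>] s, slope (fun z => ‖u z‖) s z < r :=
          hlim.eventually_lt_const hltr
        refine (hev.mono ?_).frequently
        intro z hz
        rwa [slope_def_field, div_eq_inv_mul] at hz
    · exact le_rfl
    · exact fun s _ => le_rfl
  intro t ht
  have h := key t ht
  rw [gronwallBound_of_K_ne_0 hl0] at h
  have heq : ‖x t0 - y t0‖ * Real.exp (l * (t - t0)) + δ / l * (Real.exp (l * (t - t0)) - 1)
      = Real.exp (l * (t - t0)) * ‖x t0 - y t0‖ + δ * (Real.exp (l * (t - t0)) - 1) / l := by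
    ring
  rw [← heq]
  exact h
end

section
/- Let $H$ be a Hilbert space with orthogonal projections $P_n$ converging strongly to the identity, let $K \subset H$ be compact and convex, and suppose for each $n$ the function $x^n : [t_0, t_1] \to K$ is differentiable with $\frac{d}{dt} x^n(t) = P_n F(t, x^n(t))$, where $F : [t_0,t_1] \times K \to H$ is continuous. If $x^n \to x$ uniformly on $[t_0,t_1]$ and $P_n F(t,u) \to F(t,u)$ uniformly on $[t_0,t_1] \times K$, then $x$ is differentiable and satisfies $\frac{dx}{dt}(t) = F(t, x(t))$ for all $t \in [t_0,t_1]$. -/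
open Filter

/-- Limit passage for Galerkin solutions: if `x^n` solve
`(x^n)' = P_n F(t, x^n)` in a compact convex set `K`, the projections `P n`
converge strongly to the identity, `x^n → x` uniformly, and
`P_n F → F` uniformly on `[t0,t1] × K`, then `x' = F(t, x)` on `[t0,t1]`. -/
theorem limit_of_galerkin_solutions
    {H : Type*} [NormedAddCommGroup H] [InnerProductSpace ℝ H] [CompleteSpace H]
    (t0 t1 : ℝ) (ht : t0 ≤ t1)
    (K : Set H) (hKcomp : IsCompact K) (hKconv : Convex ℝ K)
    (P : ℕ → H →L[ℝ] H)
    (hPstrong : ∀ v : H, Tendsto (fun n => P n v) atTop (nhds v))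
    (F : ℝ → H → H)
    (hF : ContinuousOn (fun p : ℝ × H => F p.1 p.2) (Set.Icc t0 t1 ×ˢ K))
    (x : ℕ → ℝ → H) (xl : ℝ → H)
    (hxK : ∀ n, ∀ t ∈ Set.Icc t0 t1, x n t ∈ K)
    (hderiv : ∀ n, ∀ t ∈ Set.Icc t0 t1,
      HasDerivWithinAt (x n) (P n (F t (x n t))) (Set.Icc t0 t1) t)
    (hxconv : TendstoUniformlyOn x xl atTop (Set.Icc t0 t1))
    (hPFconv : TendstoUniformlyOn (fun n (p : ℝ × H) => P n (F p.1 p.2))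
      (fun p : ℝ × H => F p.1 p.2) atTop (Set.Icc t0 t1 ×ˢ K)) :
    ∀ t ∈ Set.Icc t0 t1,
      HasDerivWithinAt xl (F t (xl t)) (Set.Icc t0 t1) t := by
  intro t htI
  rcases eq_or_lt_of_le ht with heq | hlt
  · -- degenerate case `t0 = t1`: the set is a singleton
    subst heq
    have hs : Set.Icc t0 t0 = {t0} := Set.Icc_self t0
    have htt : t = t0 := le_antisymm htI.2 htI.1
    subst htt
    rw [hasDerivWithinAt_iff_tendsto_slope]
    have h : Set.Icc t t \ {t} = (∅ : Set ℝ) := by simp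
    rw [h, nhdsWithin_empty]
    exact tendsto_bot
  -- main case `t0 < t1`
  have hKcl : IsClosed K := hKcomp.isClosed
  have ht0I : t0 ∈ Set.Icc t0 t1 := ⟨le_rfl, ht⟩
  have hxlK : ∀ s ∈ Set.Icc t0 t1, xl s ∈ K := fun s hs =>
    hKcl.mem_of_tendsto (hxconv.tendsto_at hs)
      (Eventually.of_forall fun n => hxK n s hs)
  have hxcont : ∀ n, ContinuousOn (x n) (Set.Icc t0 t1) := fun n s hs =>
    (hderiv n s hs).continuousWithinAt
  have hxlcont : ContinuousOn xl (Set.Icc t0 t1) :=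
    hxconv.continuousOn (Eventually.of_forall hxcont).frequently
  set g : ℝ → H := fun s => F s (xl s) with hg
  set gn : ℕ → ℝ → H := fun n s => P n (F s (x n s)) with hgn
  have hmapsxl : ∀ s ∈ Set.Icc t0 t1, (s, xl s) ∈ Set.Icc t0 t1 ×ˢ K :=
    fun s hs => ⟨hs, hxlK s hs⟩
  have hgcont : ContinuousOn g (Set.Icc t0 t1) := by
    have : ContinuousOn (fun s : ℝ => ((s, xl s) : ℝ × H)) (Set.Icc t0 t1) :=
      continuousOn_id.prodMk hxlcont
    exact hF.comp this hmapsxl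
  have hgncont : ∀ n, ContinuousOn (gn n) (Set.Icc t0 t1) := by
    intro n
    have h1 : ContinuousOn (fun s : ℝ => ((s, x n s) : ℝ × H)) (Set.Icc t0 t1) :=
      continuousOn_id.prodMk (hxcont n)
    have h2 : ContinuousOn (fun s => F s (x n s)) (Set.Icc t0 t1) :=
      hF.comp h1 fun s hs => ⟨hs, hxK n s hs⟩
    exact (P n).continuous.comp_continuousOn h2
  -- uniform convergence gn → g on the interval
  have hgu : TendstoUniformlyOn gn g atTop (Set.Icc t0 t1) := by
    rw [Metric.tendstoUniformlyOn_iff]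
    intro ε hε
    -- uniform continuity of F on the compact product set
    have hcompProd : IsCompact (Set.Icc t0 t1 ×ˢ K) := isCompact_Icc.prod hKcomp
    have hFuc : UniformContinuousOn (fun p : ℝ × H => F p.1 p.2)
        (Set.Icc t0 t1 ×ˢ K) := hcompProd.uniformContinuousOn_of_continuous hF
    rw [Metric.uniformContinuousOn_iff] at hFuc
    obtain ⟨δ, hδ, hδF⟩ := hFuc (ε / 2) (half_pos hε)
    have h1 := (Metric.tendstoUniformlyOn_iff.1 hPFconv) (ε / 2) (half_pos hε)
    have h2 := (Metric.tendstoUniformlyOn_iff.1 hxconv) δ hδ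
    filter_upwards [h1, h2] with n hn1 hn2 s hs
    have hxnK := hxK n s hs
    have hxlsK := hxlK s hs
    have hdistF : dist (F s (xl s)) (F s (x n s)) < ε / 2 := by
      apply hδF (s, xl s) ⟨hs, hxlsK⟩ (s, x n s) ⟨hs, hxnK⟩
      rw [Prod.dist_eq]
      simp only [dist_self, max_lt_iff]
      exact ⟨hδ, hn2 s hs⟩
    have hdistP : dist (F s (x n s)) (P n (F s (x n s))) < ε / 2 := by
      have := hn1 (s, x n s) ⟨hs, hxnK⟩
      simpa [dist_comm] using this
    calc dist (g s) (gn n s) ≤ dist (g s) (F s (x n s)) + dist (F s (x n s)) (gn n s) :=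
          dist_triangle _ _ _
      _ < ε / 2 + ε / 2 := add_lt_add hdistF hdistP
      _ = ε := add_halves ε
  -- integral identity for each n
  have hint_n : ∀ n, ∀ u ∈ Set.Icc t0 t1,
      ∫ s in t0..u, gn n s = x n u - x n t0 := by
    intro n u hu
    apply intervalIntegral.integral_eq_sub_of_hasDeriv_right_of_le hu.1
    · exact (hxcont n).mono (Set.Icc_subset_Icc le_rfl hu.2)
    · intro s hs
      have hsI : s ∈ Set.Icc t0 t1 := ⟨hs.1.le, hs.2.le.trans hu.2⟩
      have hmem : Set.Icc t0 t1 ∈ nhdsWithin s (Set.Ioi s) := by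
        apply mem_nhdsWithin_of_mem_nhds
        exact Icc_mem_nhds (lt_of_lt_of_le hs.1 le_rfl) (lt_of_lt_of_le hs.2 hu.2)
      exact (hderiv n s hsI).mono_of_mem_nhdsWithin hmem
    · apply ContinuousOn.intervalIntegrable
      apply (hgncont n).mono
      rw [Set.uIcc_of_le hu.1]
      exact Set.Icc_subset_Icc le_rfl hu.2
  -- integrability of g
  have hgint : ∀ u ∈ Set.Icc t0 t1, IntervalIntegrable g MeasureTheory.volume t0 u := by
    intro u hu
    apply ContinuousOn.intervalIntegrable
    apply hgcont.mono
    rw [Set.uIcc_of_le hu.1]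
    exact Set.Icc_subset_Icc le_rfl hu.2
  -- limit of the integrals
  have hkey : ∀ u ∈ Set.Icc t0 t1, xl u = xl t0 + ∫ s in t0..u, g s := by
    intro u hu
    have h1 : Tendsto (fun n => x n u - x n t0) atTop (nhds (xl u - xl t0)) :=
      (hxconv.tendsto_at hu).sub (hxconv.tendsto_at ht0I)
    have h2 : Tendsto (fun n => ∫ s in t0..u, gn n s) atTop
        (nhds (∫ s in t0..u, g s)) := by
      rw [Metric.tendsto_nhds]
      intro ε hε
      have hd : (0:ℝ) < t1 - t0 + 1 := by linarith
      set ε0 : ℝ := ε / (t1 - t0 + 1) with hε0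
      have hε0pos : 0 < ε0 := div_pos hε hd
      filter_upwards [Metric.tendstoUniformlyOn_iff.1 hgu ε0 hε0pos] with n hn
      have hgnint : IntervalIntegrable (gn n) MeasureTheory.volume t0 u := by
        apply ContinuousOn.intervalIntegrable
        apply (hgncont n).mono
        rw [Set.uIcc_of_le hu.1]
        exact Set.Icc_subset_Icc le_rfl hu.2
      have hbound : dist (∫ s in t0..u, gn n s) (∫ s in t0..u, g s) ≤ ε0 * |u - t0| := by
        rw [dist_eq_norm, ← intervalIntegral.integral_sub hgnint (hgint u hu)]
        apply intervalIntegral.norm_integral_le_of_norm_le_const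
        intro s hs
        have hsI : s ∈ Set.Icc t0 t1 := by
          rw [Set.uIoc_of_le hu.1] at hs
          exact ⟨hs.1.le, hs.2.trans hu.2⟩
        have := hn s hsI
        rw [dist_comm, dist_eq_norm] at this
        exact this.le
      have habs : |u - t0| ≤ t1 - t0 := by
        rw [abs_of_nonneg (by linarith [hu.1])]
        linarith [hu.2]
      calc dist (∫ s in t0..u, gn n s) (∫ s in t0..u, g s) ≤ ε0 * |u - t0| := hbound
        _ ≤ ε0 * (t1 - t0) := by
            exact mul_le_mul_of_nonneg_left habs hε0pos.le
        _ < ε0 * (t1 - t0 + 1) := by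
            exact mul_lt_mul_of_pos_left (by linarith) hε0pos
        _ = ε := by rw [hε0]; field_simp
    have h2' : Tendsto (fun n => x n u - x n t0) atTop
        (nhds (∫ s in t0..u, g s)) :=
      h2.congr fun n => hint_n n u hu
    have := tendsto_nhds_unique h1 h2'
    linear_combination (norm := module) this
  -- the primitive and its derivative
  set G : ℝ → H := fun u => xl t0 + ∫ s in t0..u, g s with hG
  have haemeas : MeasureTheory.AEStronglyMeasurable g
      (MeasureTheory.volume.restrict (Set.Icc t0 t1)) :=
    hgcont.aestronglyMeasurable measurableSet_Icc
  have hGderiv : HasDerivWithinAt G (g t) (Set.Icc t0 t1) t := by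
    rcases eq_or_lt_of_le htI.1 with h0 | h0
    · -- t = t0 : right derivative
      rw [← h0]
      have hmemIoi : Set.Icc t0 t1 ∈ nhdsWithin t0 (Set.Ioi t0) := by
        rw [mem_nhdsWithin]
        exact ⟨Set.Iio t1, isOpen_Iio, hlt, fun s hs => ⟨hs.2.le, hs.1.le⟩⟩
      have hmeas : StronglyMeasurableAtFilter g (nhdsWithin t0 (Set.Ioi t0))
          MeasureTheory.volume := ⟨Set.Icc t0 t1, hmemIoi, haemeas⟩
      have hcw : ContinuousWithinAt g (Set.Ioi t0) t0 := by
        have h2 : ContinuousWithinAt g (Set.Icc t0 t1) t0 := hgcont t0 ht0I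
        rw [ContinuousWithinAt, nhdsWithin_Icc_eq_nhdsGE hlt] at h2
        exact (h2 : Tendsto _ _ _).mono_left (nhdsWithin_mono t0 Set.Ioi_subset_Ici_self)
      have hd : HasDerivWithinAt (fun u => ∫ s in t0..u, g s) (g t0) (Set.Ici t0) t0 :=
        intervalIntegral.integral_hasDerivWithinAt_right
          IntervalIntegrable.refl hmeas hcw
      exact (hd.const_add (xl t0)).mono Set.Icc_subset_Ici_self
    rcases eq_or_lt_of_le htI.2 with h1 | h1
    · -- t = t1 : left derivative
      rw [h1]
      have hmemIic : Set.Icc t0 t1 ∈ nhdsWithin t1 (Set.Iic t1) := by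
        rw [mem_nhdsWithin]
        exact ⟨Set.Ioi t0, isOpen_Ioi, hlt, fun s hs => ⟨hs.1.le, hs.2⟩⟩
      have hmeas : StronglyMeasurableAtFilter g (nhdsWithin t1 (Set.Iic t1))
          MeasureTheory.volume := ⟨Set.Icc t0 t1, hmemIic, haemeas⟩
      have hcw : ContinuousWithinAt g (Set.Iic t1) t1 := by
        have h2 : ContinuousWithinAt g (Set.Icc t0 t1) t1 := hgcont t1 ⟨ht, le_rfl⟩
        rw [ContinuousWithinAt, nhdsWithin_Icc_eq_nhdsLE hlt] at h2
        exact h2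
      have hd : HasDerivWithinAt (fun u => ∫ s in t0..u, g s) (g t1) (Set.Iic t1) t1 :=
        intervalIntegral.integral_hasDerivWithinAt_right
          (hgint t1 ⟨ht, le_rfl⟩) hmeas hcw
      exact (hd.const_add (xl t0)).mono fun s hs => hs.2
    · -- interior point
      have hmem : Set.Icc t0 t1 ∈ nhds t := Icc_mem_nhds h0 h1
      have hmeas : StronglyMeasurableAtFilter g (nhds t) MeasureTheory.volume :=
        ⟨Set.Icc t0 t1, hmem, haemeas⟩
      have hca : ContinuousAt g t := (hgcont t htI).continuousAt hmem
      have hd : HasDerivAt (fun u => ∫ s in t0..u, g s) (g t) t :=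
        intervalIntegral.integral_hasDerivAt_right (hgint t htI) hmeas hca
      exact (hd.const_add (xl t0)).hasDerivWithinAt
  -- transfer from G to xl
  exact hGderiv.congr (fun u hu => hkey u hu) (hkey t htI)
end
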